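/- For all n ≥ 1, the coefficient of q^{2n-1} in C_{n,1} plus the coefficient of q^{2n-2} in C_{n,12} equals zero. -/
import Mathlib


open Polynomial

/-- The six coefficient polynomials `(C_{n,0}, C_{n,1}, C_{n,2}, C_{n,12}, C_{n,21}, C_{n,121})`. -/
structure CVec where
  c0 : Polynomial ℤ
  c1 : Polynomial ℤ
  c2 : Polynomial ℤ
  c12 : Polynomial ℤ
  c21 : Polynomial ℤ
  c121 : Polynomial ℤ

/-- One step of the recursion of Theorem 3.3. -/
noncomputable def Cstep (p : CVec) : CVec where
  c0 := X ^ 2 * p.c21 - X * (X - 1) * p.c1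
  c1 := -(X - 1) ^ 2 * p.c1 - (X - 1) * p.c0 + X ^ 2 * p.c121
  c2 := X * p.c1
  c12 := (X - 1) * p.c1 + p.c0
  c21 := -(X - 1) * p.c2 + X * p.c12 - (X - 1) ^ 2 * p.c21 + X * (X - 1) * p.c121
  c121 := p.c2 + (X - 1) * p.c21

/-- `Cw n` is the vector of polynomials `C_{n,*}`; the value at `n = 0` is junk. -/
noncomputable def Cw : ℕ → CVec
  | 0 => ⟨0, 0, 0, 0, 0, 0⟩
  | 1 => ⟨0, -(X - 1), 0, 1, 0, 0⟩
  | (n + 2) => Cstep (Cw (n + 1))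

-- Auxiliary lemmas

lemma ndeg_mul_le {p q : Polynomial ℤ} {a b : ℕ} (hp : p.natDegree ≤ a)
    (hq : q.natDegree ≤ b) : (p * q).natDegree ≤ a + b :=
  le_trans (natDegree_mul_le) (add_le_add hp hq)

lemma ndeg_add_le {p q : Polynomial ℤ} {a : ℕ} (hp : p.natDegree ≤ a)
    (hq : q.natDegree ≤ a) : (p + q).natDegree ≤ a :=
  le_trans (natDegree_add_le _ _) (max_le hp hq)

lemma ndeg_sub_le {p q : Polynomial ℤ} {a : ℕ} (hp : p.natDegree ≤ a)
    (hq : q.natDegree ≤ a) : (p - q).natDegree ≤ a :=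
  le_trans (natDegree_sub_le _ _) (max_le hp hq)

lemma ndeg_X1 : ((X : Polynomial ℤ) - 1).natDegree ≤ 1 := by
  have := natDegree_X_sub_C (1 : ℤ)
  simp only [map_one] at this
  exact this.le

lemma ndeg_X1_sq : (((X : Polynomial ℤ) - 1) ^ 2).natDegree ≤ 2 := by
  refine le_trans (natDegree_pow_le) ?_
  have := ndeg_X1
  omega

lemma ndeg_X2 : ((X : Polynomial ℤ) ^ 2).natDegree ≤ 2 := by
  simpa using (natDegree_pow_le (p := (X : Polynomial ℤ)) (n := 2))

lemma coeff_XsubOne_mul (p : Polynomial ℤ) (n : ℕ) :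
    (((X : Polynomial ℤ) - 1) * p).coeff (n + 1) = p.coeff n - p.coeff (n + 1) := by
  rw [sub_mul, one_mul, coeff_sub, coeff_X_mul]

lemma coeff_XsubOne_sq_mul (p : Polynomial ℤ) (n : ℕ) :
    ((((X : Polynomial ℤ) - 1) ^ 2) * p).coeff (n + 2)
      = p.coeff n - 2 * p.coeff (n + 1) + p.coeff (n + 2) := by
  have h1 : (n : ℕ) + 2 = (n + 1) + 1 := rfl
  rw [sq, mul_assoc, h1, coeff_XsubOne_mul, coeff_XsubOne_mul, ← h1,
    coeff_XsubOne_mul]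
  ring

/-- Degree bounds for the six polynomial families. -/
lemma Cw_degs : ∀ n : ℕ, 1 ≤ n →
    (Cw n).c0.natDegree ≤ 2 * n - 1 ∧ (Cw n).c1.natDegree ≤ 2 * n - 1 ∧
    (Cw n).c2.natDegree ≤ 2 * n - 2 ∧ (Cw n).c12.natDegree ≤ 2 * n - 2 ∧
    (Cw n).c21.natDegree ≤ 2 * n - 1 ∧ (Cw n).c121.natDegree ≤ 2 * n - 2 := by
  intro n
  induction n with
  | zero => omega
  | succ m ih =>
    intro _
    match m, ih with
    | 0, _ =>
      refine ⟨?_, ?_, ?_, ?_, ?_, ?_⟩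
      · show (0 : Polynomial ℤ).natDegree ≤ 2 * (0 + 1) - 1; simp
      · show (-(X - 1) : Polynomial ℤ).natDegree ≤ 2 * (0 + 1) - 1
        rw [natDegree_neg]; exact le_trans ndeg_X1 (by norm_num)
      · show (0 : Polynomial ℤ).natDegree ≤ 2 * (0 + 1) - 2; simp
      · show (1 : Polynomial ℤ).natDegree ≤ 2 * (0 + 1) - 2; simp
      · show (0 : Polynomial ℤ).natDegree ≤ 2 * (0 + 1) - 1; simp
      · show (0 : Polynomial ℤ).natDegree ≤ 2 * (0 + 1) - 2; simp
    | (j + 1), ih =>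
      obtain ⟨h0, h1, h2, h12, h21, h121⟩ := ih (by omega)
      have hb1 : (Cw (j + 1)).c0.natDegree ≤ 2 * j + 1 := by omega
      have hb2 : (Cw (j + 1)).c1.natDegree ≤ 2 * j + 1 := by omega
      have hb3 : (Cw (j + 1)).c2.natDegree ≤ 2 * j := by omega
      have hb4 : (Cw (j + 1)).c12.natDegree ≤ 2 * j := by omega
      have hb5 : (Cw (j + 1)).c21.natDegree ≤ 2 * j + 1 := by omega
      have hb6 : (Cw (j + 1)).c121.natDegree ≤ 2 * j := by omega
      have hgoal1 : (2 * (j + 1 + 1) - 1 : ℕ) = 2 * j + 3 := by omega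
      have hgoal2 : (2 * (j + 1 + 1) - 2 : ℕ) = 2 * j + 2 := by omega
      have hCw : Cw (j + 1 + 1) = Cstep (Cw (j + 1)) := rfl
      rw [hCw, hgoal1, hgoal2]
      set p := Cw (j + 1)
      refine ⟨?_, ?_, ?_, ?_, ?_, ?_⟩
      · -- c0
        show (X ^ 2 * p.c21 - X * (X - 1) * p.c1).natDegree ≤ 2 * j + 3
        refine ndeg_sub_le ?_ ?_
        · have := ndeg_mul_le ndeg_X2 hb5; omega
        · have hx : ((X : Polynomial ℤ) * (X - 1)).natDegree ≤ 2 :=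
            le_trans (ndeg_mul_le natDegree_X.le ndeg_X1) (by norm_num)
          have := ndeg_mul_le hx hb2; omega
      · -- c1
        show (-(X - 1) ^ 2 * p.c1 - (X - 1) * p.c0 + X ^ 2 * p.c121).natDegree ≤ 2 * j + 3
        refine ndeg_add_le (ndeg_sub_le ?_ ?_) ?_
        · rw [neg_mul, natDegree_neg]
          have := ndeg_mul_le ndeg_X1_sq hb2; omega
        · have := ndeg_mul_le ndeg_X1 hb1; omega
        · have := ndeg_mul_le ndeg_X2 hb6; omega
      · -- c2
        show ((X : Polynomial ℤ) * p.c1).natDegree ≤ 2 * j + 2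
        have := ndeg_mul_le natDegree_X.le hb2; omega
      · -- c12
        show ((X - 1) * p.c1 + p.c0).natDegree ≤ 2 * j + 2
        refine ndeg_add_le ?_ (by omega)
        have := ndeg_mul_le ndeg_X1 hb2; omega
      · -- c21
        show (-(X - 1) * p.c2 + X * p.c12 - (X - 1) ^ 2 * p.c21
            + X * (X - 1) * p.c121).natDegree ≤ 2 * j + 3
        refine ndeg_add_le (ndeg_sub_le (ndeg_add_le ?_ ?_) ?_) ?_
        · rw [neg_mul, natDegree_neg]
          have := ndeg_mul_le ndeg_X1 hb3; omega
        · have := ndeg_mul_le natDegree_X.le hb4; omega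
        · have := ndeg_mul_le ndeg_X1_sq hb5; omega
        · have hx : ((X : Polynomial ℤ) * (X - 1)).natDegree ≤ 2 :=
            le_trans (ndeg_mul_le natDegree_X.le ndeg_X1) (by norm_num)
          have := ndeg_mul_le hx hb6; omega
      · -- c121
        show (p.c2 + (X - 1) * p.c21).natDegree ≤ 2 * j + 2
        refine ndeg_add_le (by omega) ?_
        have := ndeg_mul_le ndeg_X1 hb5; omega

theorem top_coeffs_cancel : ∀ n : ℕ, 1 ≤ n →
    (Cw n).c1.coeff (2 * n - 1) + (Cw n).c12.coeff (2 * n - 2) = 0 := by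
  intro n hn
  match n, hn with
  | 1, _ =>
    have h1 : (Cw 1).c1 = -(X - 1) := rfl
    have h2 : (Cw 1).c12 = 1 := rfl
    rw [show (2 * 1 - 1 : ℕ) = 1 from rfl, show (2 * 1 - 2 : ℕ) = 0 from rfl, h1, h2]
    simp [Polynomial.coeff_one]
  | (m + 2), _ =>
    obtain ⟨h0, h1, h2, h12, h21, h121⟩ := Cw_degs (m + 1) (by omega)
    set p := Cw (m + 1) with hp
    set k := 2 * m + 1 with hk
    have hc1 : p.c1.natDegree ≤ k := by omega
    have hc0 : p.c0.natDegree ≤ k := by omega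
    have hc121 : p.c121.natDegree < k := by omega
    have z1 : p.c1.coeff (k + 1) = 0 :=
      coeff_eq_zero_of_natDegree_lt (by omega)
    have z2 : p.c1.coeff (k + 2) = 0 :=
      coeff_eq_zero_of_natDegree_lt (by omega)
    have z3 : p.c0.coeff (k + 1) = 0 :=
      coeff_eq_zero_of_natDegree_lt (by omega)
    have z4 : p.c0.coeff (k + 2) = 0 :=
      coeff_eq_zero_of_natDegree_lt (by omega)
    have z5 : p.c121.coeff k = 0 :=
      coeff_eq_zero_of_natDegree_lt (by omega)
    have hi1 : (2 * (m + 2) - 1 : ℕ) = k + 2 := by omega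
    have hi2 : (2 * (m + 2) - 2 : ℕ) = k + 1 := by omega
    have hCw : Cw (m + 2) = Cstep p := rfl
    rw [hCw, hi1, hi2]
    simp only [Cstep]
    have e3 : ((X : Polynomial ℤ) ^ 2 * p.c121).coeff (k + 2) = p.c121.coeff k :=
      coeff_X_pow_mul p.c121 2 k
    rw [coeff_add, coeff_sub, neg_mul, coeff_neg, coeff_XsubOne_sq_mul,
      coeff_XsubOne_mul (p := p.c0) (n := k + 1), e3, coeff_add,
      coeff_XsubOne_mul]
    rw [z1, z2, z3, z4, z5]
    ring
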